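/- Let G be a graph and M a matching in G. If G is equimatchable, then the graph G - N_e[M] obtained by deleting all edges adjacent to or in M (and the resulting isolated vertices may be kept or removed) is equimatchable. -/

import Mathlib

/-- `F` is an edge dominating set of `G`: every edge of `G` is in `F` or shares a
vertex with an edge of `F` (edges of `F` themselves share a vertex with themselves). -/
def IsEDS {V : Type*} (G : SimpleGraph V) (F : Finset (Sym2 V)) : Prop :=
  ↑F ⊆ G.edgeSet ∧ ∀ e ∈ G.edgeSet, ∃ f ∈ F, ∃ v : V, v ∈ e ∧ v ∈ f

/-- `F` is a minimal edge dominating set of `G`. -/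
def IsMinEDS {V : Type*} (G : SimpleGraph V) (F : Finset (Sym2 V)) : Prop :=
  IsEDS G F ∧ ∀ F' ⊂ F, ¬ IsEDS G F'

/-- `G` is well-edge-dominated: all minimal edge dominating sets have the same size. -/
def WellEdgeDominated {V : Type*} (G : SimpleGraph V) : Prop :=
  ∀ F₁ F₂ : Finset (Sym2 V), IsMinEDS G F₁ → IsMinEDS G F₂ → F₁.card = F₂.card

/-- `M` is a matching of `G`: a set of pairwise vertex-disjoint edges. -/
def IsMatchingSet {V : Type*} (G : SimpleGraph V) (M : Finset (Sym2 V)) : Prop :=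
  ↑M ⊆ G.edgeSet ∧ ∀ e ∈ M, ∀ f ∈ M, e ≠ f → ∀ v : V, ¬ (v ∈ e ∧ v ∈ f)

/-- `M` is a maximal matching of `G`: a matching such that every edge of `G`
shares a vertex with an edge of `M` (so no edge can be added). -/
def IsMaximalMatching {V : Type*} (G : SimpleGraph V) (M : Finset (Sym2 V)) : Prop :=
  IsMatchingSet G M ∧ ∀ e ∈ G.edgeSet, ∃ f ∈ M, ∃ v : V, v ∈ e ∧ v ∈ f

/-- `G` is equimatchable: all maximal matchings have the same size. -/
def Equimatchable {V : Type*} (G : SimpleGraph V) : Prop :=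
  ∀ M₁ M₂ : Finset (Sym2 V), IsMaximalMatching G M₁ → IsMaximalMatching G M₂ →
    M₁.card = M₂.card


/-- The graph `G - N_e[M]`: delete all edges in or adjacent to an edge of `M`,
i.e. the subgraph on the vertices not saturated by `M`. -/
def deleteClosedEdgeNbhd {V : Type*} (G : SimpleGraph V) (M : Finset (Sym2 V)) :
    SimpleGraph V where
  Adj a b := G.Adj a b ∧ ∀ f ∈ M, a ∉ f ∧ b ∉ f
  symm := by
    constructor
    intro a b h
    exact ⟨h.1.symm, fun f hf => ⟨(h.2 f hf).2, (h.2 f hf).1⟩⟩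
  loopless := ⟨fun a h => G.loopless.irrefl a h.1⟩

/-- If `G` is equimatchable and `M` is a matching in `G`, then `G - N_e[M]` is equimatchable. -/
theorem equimatchable_deleteClosedEdgeNbhd {V : Type*} (G : SimpleGraph V)
    (M : Finset (Sym2 V)) (hM : IsMatchingSet G M) (hG : Equimatchable G) :
    Equimatchable (deleteClosedEdgeNbhd G M) := by
  classical
  set G' := deleteClosedEdgeNbhd G M with hG'
  have key : ∀ e ∈ G'.edgeSet, ∀ v ∈ e, ∀ f ∈ M, v ∉ f := by
    intro e
    induction e using Sym2.ind with
    | _ a b =>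
      intro he v hv f hf
      rw [SimpleGraph.mem_edgeSet] at he
      rcases Sym2.mem_iff.mp hv with rfl | rfl
      · exact (he.2 f hf).1
      · exact (he.2 f hf).2
  have sub : G'.edgeSet ⊆ G.edgeSet := by
    intro e
    induction e using Sym2.ind with
    | _ a b =>
      intro he
      rw [SimpleGraph.mem_edgeSet] at he ⊢
      exact he.1
  have main : ∀ M' : Finset (Sym2 V), IsMaximalMatching G' M' →
      IsMaximalMatching G (M ∪ M') ∧ Disjoint M M' := by
    intro M' hM'
    have hM'G' : ↑M' ⊆ G'.edgeSet := hM'.1.1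
    have hdisj : Disjoint M M' := by
      rw [Finset.disjoint_left]
      intro e heM heM'
      induction e using Sym2.ind with
      | _ a b =>
        exact key _ (hM'G' heM') a (Sym2.mem_mk_left a b) _ heM (Sym2.mem_mk_left a b)
    refine ⟨⟨⟨?_, ?_⟩, ?_⟩, hdisj⟩
    · intro e he
      rcases Finset.mem_union.mp he with h | h
      · exact hM.1 h
      · exact sub (hM'G' h)
    · intro e he f hf hef v hv
      rcases Finset.mem_union.mp he with he' | he' <;>
        rcases Finset.mem_union.mp hf with hf' | hf'
      · exact hM.2 e he' f hf' hef v hv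
      · exact key f (hM'G' hf') v hv.2 e he' hv.1
      · exact key e (hM'G' he') v hv.1 f hf' hv.2
      · exact hM'.1.2 e he' f hf' hef v hv
    · intro e he
      by_cases h : ∃ f ∈ M, ∃ v : V, v ∈ e ∧ v ∈ f
      · obtain ⟨f, hf, v, hv⟩ := h
        exact ⟨f, Finset.mem_union_left _ hf, v, hv⟩
      · push_neg at h
        have heG' : e ∈ G'.edgeSet := by
          induction e using Sym2.ind with
          | _ a b =>
            rw [SimpleGraph.mem_edgeSet] at he ⊢
            refine ⟨he, fun f hf => ?_⟩
            constructor
            · intro haf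
              exact h f hf a (Sym2.mem_mk_left a b) haf
            · intro hbf
              exact h f hf b (Sym2.mem_mk_right a b) hbf
        obtain ⟨f, hf, v, hv⟩ := hM'.2 e heG'
        exact ⟨f, Finset.mem_union_right _ hf, v, hv⟩
  intro M₁ M₂ h₁ h₂
  obtain ⟨hmax₁, hd₁⟩ := main M₁ h₁
  obtain ⟨hmax₂, hd₂⟩ := main M₂ h₂
  have := hG (M ∪ M₁) (M ∪ M₂) hmax₁ hmax₂
  rw [Finset.card_union_of_disjoint hd₁, Finset.card_union_of_disjoint hd₂] at this
  omega
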